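/- Let Φ be an injective IFS and a ∈ Ω_k such that (Φ,a) has no singular connection. If the set Q_a := (⋃_{n≥0} Q_a^{(n)}) ∩ K_Φ is finite, then f_{Φ,a} is asymptotically periodic: f_{Φ,a} has at most finitely many periodic orbits and the ω-limit set of every point x ∈ ℝ is a periodic orbit. -/

import Mathlib

open Filter Set Topology
open scoped NNReal

noncomputable def pcIdx {k : ℕ} (hk : 2 ≤ k) (a : Fin (k-1) → ℝ) (x : ℝ) : Fin k :=
  ⟨(Finset.univ.filter fun i => a i ≤ x).card, by
    have h := Finset.card_filter_le (Finset.univ : Finset (Fin (k-1))) (fun i => a i ≤ x)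
    simp only [Finset.card_univ, Fintype.card_fin] at h
    omega⟩

/-- The piecewise contraction `f_{Φ,a}` determined by the IFS `φ` and partition points `a`. -/
noncomputable def pc {k : ℕ} (hk : 2 ≤ k) (φ : Fin k → ℝ → ℝ) (a : Fin (k-1) → ℝ) (x : ℝ) : ℝ :=
  φ (pcIdx hk a x) x

/-- `φ_ω = φ_{ω_n} ∘ ⋯ ∘ φ_{ω_1}`. -/
def wcomp {k : ℕ} (φ : Fin k → ℝ → ℝ) {n : ℕ} (ω : Fin n → Fin k) (x : ℝ) : ℝ :=
  (List.ofFn ω).foldl (fun y i => φ i y) x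

/-- `(Φ,a)` has a singular connection: `φ_ω(S_a) ∩ S_a ≠ ∅` for some nonempty word `ω`. -/
def hasSingConn {k : ℕ} (φ : Fin k → ℝ → ℝ) (a : Fin (k-1) → ℝ) : Prop :=
  ∃ n : ℕ, ∃ ω : Fin (n+1) → Fin k, ∃ i j : Fin (k-1), wcomp φ ω (a i) = a j

/-- `max_i |z i|`. -/
noncomputable def maxAbs {k : ℕ} (hk : 2 ≤ k) (z : Fin k → ℝ) : ℝ :=
  Finset.univ.sup' (Finset.univ_nonempty_iff.mpr ⟨⟨0, by omega⟩⟩) fun i => |z i|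

/-- The set of itineraries of order `n` of `(Φ,a)`. -/
noncomputable def itin {k : ℕ} (hk : 2 ≤ k) (φ : Fin k → ℝ → ℝ) (a : Fin (k-1) → ℝ) (n : ℕ) :
    Set (Fin n → Fin k) :=
  {ω | ∃ x : ℝ, (∀ j < n, (pc hk φ a)^[j] x ∉ Set.range a) ∧
       ∀ j : Fin n, ω j = pcIdx hk a ((pc hk φ a)^[(j : ℕ)] x)}

/-- `I^{(n)}_{Φ,a}(ε) = ⋃_{|δ| ≤ ε} I^{(n)}_{Φ,a+δ}`. -/
noncomputable def itinE {k : ℕ} (hk : 2 ≤ k) (φ : Fin k → ℝ → ℝ) (a : Fin (k-1) → ℝ)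
    (ε : ℝ) (n : ℕ) : Set (Fin n → Fin k) :=
  {ω | ∃ δ : ℝ, |δ| ≤ ε ∧ ω ∈ itin hk φ (fun i => a i + δ) n}

/-- `Ω^ε_{Φ,a} = ⋂_{m ≥ 1} closure (⋃_{n ≥ m} ⋃_{ω ∈ I^{(n)}(ε)} {φ_ω(0)})`. -/
noncomputable def omegaSet {k : ℕ} (hk : 2 ≤ k) (φ : Fin k → ℝ → ℝ) (a : Fin (k-1) → ℝ)
    (ε : ℝ) : Set ℝ :=
  ⋂ m : ℕ, closure {y : ℝ | ∃ n, m ≤ n ∧ ∃ ω ∈ itinE hk φ a ε n, wcomp φ ω 0 = y}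

/-- The ω-limit set of `x` under `f`. -/
def omegaLimitPt (f : ℝ → ℝ) (x : ℝ) : Set ℝ :=
  {y | MapClusterPt y Filter.atTop fun n => f^[n] x}

/-- `f` is asymptotically periodic. -/
def AsympPeriodic (f : ℝ → ℝ) : Prop :=
  {x : ℝ | ∃ p : ℕ, 1 ≤ p ∧ f^[p] x = x}.Finite ∧
  ∀ x : ℝ, ∃ z : ℝ, ∃ p : ℕ, 1 ≤ p ∧ f^[p] z = z ∧
    omegaLimitPt f x = Set.range fun j : Fin p => f^[(j : ℕ)] z

/-- `f` is asymptotically periodic on the invariant set `s`. -/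
def AsympPeriodicOn (f : ℝ → ℝ) (s : Set ℝ) : Prop :=
  {x ∈ s | ∃ p : ℕ, 1 ≤ p ∧ f^[p] x = x}.Finite ∧
  ∀ x ∈ s, ∃ z : ℝ, ∃ p : ℕ, 1 ≤ p ∧ f^[p] z = z ∧
    omegaLimitPt f x = Set.range fun j : Fin p => f^[(j : ℕ)] z


/-! ### Auxiliary machinery -/

noncomputable def lcomp {k : ℕ} (φ : Fin k → ℝ → ℝ) (L : List (Fin k)) (x : ℝ) : ℝ :=
  L.foldl (fun y i => φ i y) x

lemma lcomp_nil {k : ℕ} (φ : Fin k → ℝ → ℝ) (x : ℝ) : lcomp φ [] x = x := rfl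

lemma lcomp_append {k : ℕ} (φ : Fin k → ℝ → ℝ) (L M : List (Fin k)) (x : ℝ) :
    lcomp φ (L ++ M) x = lcomp φ M (lcomp φ L x) := by
  simp [lcomp, List.foldl_append]

lemma lcomp_singleton {k : ℕ} (φ : Fin k → ℝ → ℝ) (i : Fin k) (x : ℝ) :
    lcomp φ [i] x = φ i x := rfl

lemma lcomp_lipschitz {k : ℕ} (φ : Fin k → ℝ → ℝ) (lam : ℝ≥0)
    (hlip : ∀ i, LipschitzWith lam (φ i)) (L : List (Fin k)) :
    LipschitzWith (lam ^ L.length) (lcomp φ L) := by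
  induction L with
  | nil => simpa using (show LipschitzWith 1 (lcomp φ []) from LipschitzWith.id)
  | cons i L ih =>
      have : lcomp φ (i :: L) = (lcomp φ L) ∘ (φ i) := by
        funext x; simp [lcomp]
      rw [this, List.length_cons, pow_succ]
      exact ih.comp (hlip i)

lemma singConn_of_list {k : ℕ} (φ : Fin k → ℝ → ℝ) (a : Fin (k-1) → ℝ)
    (L : List (Fin k)) (hL : L ≠ []) (i j : Fin (k-1)) (h : lcomp φ L (a i) = a j) :
    hasSingConn φ a := by
  obtain ⟨n, hn⟩ : ∃ n, L.length = n + 1 := by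
    cases L with
    | nil => exact absurd rfl hL
    | cons b M => exact ⟨M.length, rfl⟩
  refine ⟨n, fun l => L.get ⟨(l : ℕ), by omega⟩, i, j, ?_⟩
  have hofn : List.ofFn (fun l : Fin (n+1) => L.get ⟨(l : ℕ), by omega⟩) = L := by
    apply List.ext_get
    · simp [hn]
    · intro m h1 h2
      rw [List.get_ofFn]
      rfl
  show wcomp φ _ (a i) = a j
  rw [wcomp, hofn]
  exact h

/-- The good set: points of `[-R,R]` whose entire orbit avoids `range a`. -/
def GS {k : ℕ} (hk : 2 ≤ k) (φ : Fin k → ℝ → ℝ) (a : Fin (k-1) → ℝ) (R : ℝ) : Set ℝ :=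
  {t | |t| ≤ R ∧ ∀ n : ℕ, (pc hk φ a)^[n] t ∉ Set.range a}

lemma GS_not_range {k : ℕ} {hk : 2 ≤ k} {φ : Fin k → ℝ → ℝ} {a : Fin (k-1) → ℝ} {R : ℝ}
    {t : ℝ} (ht : t ∈ GS hk φ a R) : t ∉ Set.range a := by
  have := ht.2 0
  simpa using this

lemma pcIdx_congr' {k : ℕ} (hk : 2 ≤ k) (a : Fin (k-1) → ℝ) {x y : ℝ}
    (h : ∀ i, a i ≤ x ↔ a i ≤ y) : pcIdx hk a x = pcIdx hk a y := by
  unfold pcIdx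
  apply Fin.ext
  simp only
  congr 1
  apply Finset.filter_congr
  intro i _
  simp [h i]

lemma pcIdx_congr {k : ℕ} (hk : 2 ≤ k) (a : Fin (k-1) → ℝ) {x y : ℝ}
    (h : ∀ i, a i ∉ Set.uIcc x y) : pcIdx hk a x = pcIdx hk a y := by
  apply pcIdx_congr' hk a
  intro i
  constructor
  · intro hx
    by_contra hy
    exact h i (Set.mem_uIcc.2 (Or.inr ⟨le_of_not_ge hy, hx⟩))
  · intro hy
    by_contra hx
    exact h i (Set.mem_uIcc.2 (Or.inl ⟨le_of_not_ge hx, hy⟩))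

lemma pcIdx_eventually {k : ℕ} (hk : 2 ≤ k) (a : Fin (k-1) → ℝ) {x : ℝ}
    (h : x ∉ Set.range a) : ∀ᶠ y in 𝓝 x, pcIdx hk a y = pcIdx hk a x := by
  have h1 : ∀ᶠ y in 𝓝 x, ∀ i, (a i ≤ y ↔ a i ≤ x) := by
    rw [eventually_all]
    intro i
    rcases lt_or_gt_of_ne (fun he => h ⟨i, he⟩) with hlt | hgt
    · filter_upwards [eventually_gt_nhds hlt] with y hy
      simp [hlt.le, hy.le]
    · filter_upwards [eventually_lt_nhds hgt] with y hy
      simp [not_le.2 hgt, not_le.2 hy]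
  filter_upwards [h1] with y hy
  exact pcIdx_congr' hk a hy

section Core
variable {k : ℕ} (hk : 2 ≤ k) (φ : Fin k → ℝ → ℝ) (lam : ℝ≥0)
  (hlip : ∀ i, LipschitzWith lam (φ i)) (a : Fin (k-1) → ℝ) (R : ℝ)
  (hfb : ∀ t : ℝ, |t| ≤ R → |pc hk φ a t| ≤ R)

include hlip hfb

lemma GS_maps {t : ℝ} (ht : t ∈ GS hk φ a R) : pc hk φ a t ∈ GS hk φ a R := by
  refine ⟨hfb t ht.1, fun n => ?_⟩
  have := ht.2 (n + 1)
  rwa [Function.iterate_add_apply, Function.iterate_one] at this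

lemma GS_pcIdx {x y t : ℝ} (h : Set.uIcc x y ⊆ GS hk φ a R) (ht : t ∈ Set.uIcc x y) :
    pcIdx hk a t = pcIdx hk a x := by
  apply pcIdx_congr hk a
  intro i hi
  have : a i ∈ Set.uIcc x y :=
    Set.uIcc_subset_uIcc ht Set.left_mem_uIcc hi
  exact GS_not_range (h this) ⟨i, rfl⟩

lemma GS_uIcc_step {x y : ℝ} (h : Set.uIcc x y ⊆ GS hk φ a R) :
    Set.uIcc (pc hk φ a x) (pc hk φ a y) ⊆ GS hk φ a R := by
  set i := pcIdx hk a x with hi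
  have hpc : ∀ t ∈ Set.uIcc x y, pc hk φ a t = φ i t := by
    intro t ht
    rw [pc, GS_pcIdx hk φ lam hlip a R hfb h ht]
  have h1 : Set.uIcc (pc hk φ a x) (pc hk φ a y) ⊆ φ i '' Set.uIcc x y := by
    rw [hpc x Set.left_mem_uIcc, hpc y Set.right_mem_uIcc]
    exact intermediate_value_uIcc ((hlip i).continuous.continuousOn)
  intro w hw
  obtain ⟨t, ht, rfl⟩ := h1 hw
  rw [← hpc t ht]
  exact GS_maps hk φ lam hlip a R hfb (h ht)

lemma GS_uIcc_iter {x y : ℝ} (h : Set.uIcc x y ⊆ GS hk φ a R) (n : ℕ) :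
    Set.uIcc ((pc hk φ a)^[n] x) ((pc hk φ a)^[n] y) ⊆ GS hk φ a R := by
  induction n with
  | zero => simpa using h
  | succ n ih =>
      rw [Function.iterate_succ_apply', Function.iterate_succ_apply']
      exact GS_uIcc_step hk φ lam hlip a R hfb ih

lemma GS_itin {x y : ℝ} (h : Set.uIcc x y ⊆ GS hk φ a R) (n : ℕ) :
    pcIdx hk a ((pc hk φ a)^[n] x) = pcIdx hk a ((pc hk φ a)^[n] y) := by
  exact (GS_pcIdx hk φ lam hlip a R hfb (GS_uIcc_iter hk φ lam hlip a R hfb h n)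
    Set.right_mem_uIcc).symm

lemma GS_contract {x y : ℝ} (h : Set.uIcc x y ⊆ GS hk φ a R) (n : ℕ) :
    |(pc hk φ a)^[n] x - (pc hk φ a)^[n] y| ≤ (lam : ℝ) ^ n * |x - y| := by
  induction n with
  | zero => simp
  | succ n ih =>
      rw [Function.iterate_succ_apply', Function.iterate_succ_apply']
      have hidx := GS_itin hk φ lam hlip a R hfb h n
      have : pc hk φ a ((pc hk φ a)^[n] y) =
          φ (pcIdx hk a ((pc hk φ a)^[n] x)) ((pc hk φ a)^[n] y) := by
        rw [pc, hidx]
      rw [pc, this]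
      set i := pcIdx hk a ((pc hk φ a)^[n] x)
      have h1 : |φ i ((pc hk φ a)^[n] x) - φ i ((pc hk φ a)^[n] y)|
          ≤ (lam : ℝ) * |(pc hk φ a)^[n] x - (pc hk φ a)^[n] y| := by
        have := (hlip i).dist_le_mul ((pc hk φ a)^[n] x) ((pc hk φ a)^[n] y)
        simpa [Real.dist_eq] using this
      have h2 : (lam : ℝ) * |(pc hk φ a)^[n] x - (pc hk φ a)^[n] y|
          ≤ (lam : ℝ) * ((lam : ℝ) ^ n * |x - y|) :=
        mul_le_mul_of_nonneg_left ih lam.coe_nonneg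
      calc |φ i ((pc hk φ a)^[n] x) - φ i ((pc hk φ a)^[n] y)|
          ≤ (lam : ℝ) * ((lam : ℝ) ^ n * |x - y|) := h1.trans h2
        _ = (lam : ℝ) ^ (n + 1) * |x - y| := by ring



set_option linter.unusedSectionVars false

lemma key (hlam : lam < 1) (hns : ¬ hasSingConn φ a)
    (u : ℝ) (T : ℕ) (hT : 1 ≤ T)
    (huv : Set.uIcc u ((pc hk φ a)^[T] u) ⊆ GS hk φ a R) :
    ∃ z : ℝ, (pc hk φ a)^[T] z = z ∧
      Filter.Tendsto (fun n => |(pc hk φ a)^[n] u - (pc hk φ a)^[n] z|)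
        Filter.atTop (nhds 0) := by
  set f := pc hk φ a with hf
  set ι : ℕ → Fin k := fun n => pcIdx hk a (f^[n] u) with hιdef
  set L : ℕ → ℕ → List (Fin k) := fun s m => (List.range m).map (fun j => ι (s + j)) with hLdef
  have hLlen : ∀ s m, (L s m).length = m := by intro s m; simp [hLdef]
  have hLsplit : ∀ s m m', L s (m + m') = L s m ++ L (s + m) m' := by
    intro s m m'
    simp only [hLdef, List.range_add, List.map_append, List.map_map]
    congr 1
    apply List.map_congr_left
    intro j _
    simp [Function.comp, Nat.add_assoc]
  -- periodicity of the itinerary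
  have hperι : ∀ n, ι (n + T) = ι n := by
    intro n
    have h1 := GS_itin hk φ lam hlip a R hfb huv n
    have h2 : f^[n] (f^[T] u) = f^[n + T] u := (Function.iterate_add_apply f n T u).symm
    simp only [hιdef]
    rw [← h2, ← h1]
  have hperιmul : ∀ n q, ι (n + T * q) = ι n := by
    intro n q
    induction q with
    | zero => simp
    | succ q ih =>
        have : n + T * (q + 1) = (n + T * q) + T := by ring
        rw [this, hperι, ih]
  have hLper : ∀ s m, L (s + T) m = L s m := by
    intro s m
    simp only [hLdef]
    apply List.map_congr_left
    intro j _
    have : s + T + j = (s + j) + T := by ring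
    rw [this, hperι]
  have hLpermul : ∀ q m, L (T * q) m = L 0 m := by
    intro q m
    induction q with
    | zero => simp
    | succ q ih =>
        have : T * (q + 1) = T * q + T := by ring
        rw [this, hLper, ih]
  -- orbit of u follows the word
  have hfu : ∀ n, f^[n] u = lcomp φ (L 0 n) u := by
    intro n
    induction n with
    | zero => simp [hLdef, lcomp_nil]
    | succ n ih =>
        have h1 : L 0 (n + 1) = L 0 n ++ [ι n] := by
          rw [hLsplit 0 n 1]
          congr 1
          simp [hLdef, List.range_succ]
        rw [Function.iterate_succ_apply', ih, h1, lcomp_append, lcomp_singleton]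
        show pc hk φ a (lcomp φ (L 0 n) u) = _
        rw [pc, ← ih]
  -- the contraction g
  set g : ℝ → ℝ := lcomp φ (L 0 T) with hgdef
  have hglip : LipschitzWith (lam ^ T) g := by
    have := lcomp_lipschitz φ lam hlip (L 0 T)
    rwa [hLlen] at this
  have hcon : ContractingWith (lam ^ T) g :=
    ⟨by exact_mod_cast pow_lt_one₀ (zero_le (a := lam)) hlam (by omega), hglip⟩
  set z : ℝ := ContractingWith.fixedPoint g hcon with hzdef
  have hzfix : g z = z := hcon.fixedPoint_isFixedPt
  have htend : Filter.Tendsto (fun j => g^[j] u) Filter.atTop (nhds z) :=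
    hcon.tendsto_iterate_fixedPoint u
  -- iterates of g along the orbit
  have hgiter : ∀ j, g^[j] u = f^[T * j] u := by
    intro j
    induction j with
    | zero => simp
    | succ j ih =>
        rw [Function.iterate_succ_apply', ih]
        have h1 : T * (j + 1) = T * j + T := by ring
        rw [h1, hfu (T * j + T), hLsplit 0 (T * j) T, lcomp_append, ← hfu (T * j)]
        simp only [Nat.zero_add, hLpermul]
        rfl
  have hshift : ∀ n j, f^[n + T * j] u = lcomp φ (L 0 n) (g^[j] u) := by
    intro n j
    have h1 : n + T * j = T * j + n := by ring
    rw [h1, hfu (T * j + n), hLsplit 0 (T * j) n, lcomp_append, ← hfu (T * j), hgiter j]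
    simp only [Nat.zero_add, hLpermul]
  have hWn : ∀ n, Filter.Tendsto (fun j => f^[n + T * j] u) Filter.atTop
      (nhds (lcomp φ (L 0 n) z)) := by
    intro n
    have hc : Continuous (lcomp φ (L 0 n)) := (lcomp_lipschitz φ lam hlip _).continuous
    have := (hc.tendsto z).comp htend
    refine this.congr fun j => ?_
    exact (hshift n j).symm
  -- no singular value on the limit word (uses no singular connection)
  have nra : ∀ n, n < T → lcomp φ (L 0 n) z ∉ Set.range a := by
    intro n hn hmem
    obtain ⟨i, hi⟩ := hmem
    apply hns
    have hsplitT : L 0 T = L 0 n ++ L n (T - n) := by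
      have : n + (T - n) = T := by omega
      rw [← this, hLsplit]
      simp
    have h1 : z = lcomp φ (L n (T - n)) (a i) := by
      conv_lhs => rw [← hzfix]
      rw [hgdef, hsplitT, lcomp_append, hi]
    have h2 : lcomp φ (L n (T - n) ++ L 0 n) (a i) = a i := by
      rw [lcomp_append, ← h1, hi]
    refine singConn_of_list φ a _ ?_ i i h2
    intro hnil
    have := congrArg List.length hnil
    rw [List.length_append, hLlen, hLlen] at this
    simp at this
    omega
  have hidx : ∀ n, n < T → pcIdx hk a (lcomp φ (L 0 n) z) = ι n := by
    intro n hn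
    have hloc := pcIdx_eventually hk a (nra n hn)
    have hev := (hWn n).eventually hloc
    obtain ⟨j, hj⟩ := hev.exists
    rw [← hj]
    have : f^[n + T * j] u = f^[n + T * j] u := rfl
    show pcIdx hk a (f^[n + T * j] u) = ι n
    exact hperιmul n j
  -- the fixed point follows the word
  have hfz : ∀ n, n ≤ T → f^[n] z = lcomp φ (L 0 n) z := by
    intro n hn
    induction n with
    | zero => simp [hLdef, lcomp_nil]
    | succ n ih =>
        have hn' : n < T := by omega
        have h1 : L 0 (n + 1) = L 0 n ++ [ι n] := by
          rw [hLsplit 0 n 1]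
          congr 1
          simp [hLdef, List.range_succ]
        rw [Function.iterate_succ_apply', ih (by omega), h1, lcomp_append, lcomp_singleton]
        show pc hk φ a (lcomp φ (L 0 n) z) = _
        rw [pc, hidx n hn']
  have hzT : f^[T] z = z := by rw [hfz T le_rfl, ← hgdef, hzfix]
  -- the word-image of z is periodic, so z follows the word forever
  have hwper : ∀ n, lcomp φ (L 0 (T + n)) z = lcomp φ (L 0 n) z := by
    intro n
    rw [hLsplit 0 T n, lcomp_append, ← hgdef, hzfix]
    have : L (0 + T) n = L 0 n := by rw [Nat.zero_add, ← Nat.zero_add T, hLper]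
    rw [this]
  have hfzall : ∀ n, f^[n] z = lcomp φ (L 0 n) z := by
    intro n
    induction n using Nat.strong_induction_on with
    | _ n ih =>
        by_cases hn : n ≤ T
        · exact hfz n hn
        · obtain ⟨m, rfl⟩ : ∃ m, n = T + m := ⟨n - T, by omega⟩
          rw [hwper, Nat.add_comm, Function.iterate_add_apply, hzT]
          exact ih m (by omega)
  have hWn' : ∀ n, Filter.Tendsto (fun j => f^[n + T * j] u) Filter.atTop
      (nhds (f^[n] z)) := by
    intro n
    rw [hfzall n]
    exact hWn n
  -- contraction estimates
  refine ⟨z, hzT, ?_⟩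
  set lr : ℝ := (lam : ℝ) with hlr
  have hlr0 : 0 ≤ lr := lam.coe_nonneg
  have hlr1 : lr < 1 := hlam
  have hlrT : lr ^ T < 1 := pow_lt_one₀ hlr0 hlr1 (by omega)
  set d : ℝ := |u - f^[T] u| with hd
  have hctr : ∀ m, |f^[m] u - f^[m + T] u| ≤ lr ^ m * d := by
    intro m
    have h0 := GS_contract hk φ lam hlip a R hfb huv m
    have h2 : f^[m + T] u = f^[m] (f^[T] u) := Function.iterate_add_apply f m T u
    rw [h2]
    exact h0
  have hA : ∀ n j, |f^[n] u - f^[n + T * j] u| ≤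
      (∑ l ∈ Finset.range j, lr ^ (n + T * l)) * d := by
    intro n j
    induction j with
    | zero => simp
    | succ j ih =>
        have h1 : |f^[n] u - f^[n + T * (j+1)] u| ≤
            |f^[n] u - f^[n + T * j] u| + |f^[n + T * j] u - f^[n + T * (j+1)] u| := by
          have : n + T * (j + 1) = (n + T * j) + T := by ring
          rw [this]
          exact abs_sub_le _ _ _
        have h2 : |f^[n + T * j] u - f^[n + T * (j+1)] u| ≤ lr ^ (n + T * j) * d := by
          have : n + T * (j + 1) = (n + T * j) + T := by ring
          rw [this]
          exact hctr (n + T * j)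
        rw [Finset.sum_range_succ, add_mul]
        linarith
  have hgeom : ∀ n j, (∑ l ∈ Finset.range j, lr ^ (n + T * l)) * d ≤
      lr ^ n * (d * (1 - lr ^ T)⁻¹) := by
    intro n j
    have hd0 : 0 ≤ d := abs_nonneg _
    have h1 : ∑ l ∈ Finset.range j, lr ^ (n + T * l)
        = lr ^ n * ∑ l ∈ Finset.range j, (lr ^ T) ^ l := by
      rw [Finset.mul_sum]
      apply Finset.sum_congr rfl
      intro l _
      rw [← pow_mul, ← pow_add]
    have h2 : ∑ l ∈ Finset.range j, (lr ^ T) ^ l ≤ (1 - lr ^ T)⁻¹ := by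
      have hs :Summable (fun l : ℕ => (lr ^ T) ^ l) :=
        summable_geometric_of_lt_one (pow_nonneg hlr0 T) hlrT
      calc ∑ l ∈ Finset.range j, (lr ^ T) ^ l
          ≤ ∑' l : ℕ, (lr ^ T) ^ l :=
            Summable.sum_le_tsum _ (fun i _ => pow_nonneg (pow_nonneg hlr0 T) i) hs
        _ = (1 - lr ^ T)⁻¹ := tsum_geometric_of_lt_one (pow_nonneg hlr0 T) hlrT
    rw [h1]
    have h3 : lr ^ n * (∑ l ∈ Finset.range j, (lr ^ T) ^ l) * d ≤
        lr ^ n * (1 - lr ^ T)⁻¹ * d := by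
      apply mul_le_mul_of_nonneg_right _ hd0
      exact mul_le_mul_of_nonneg_left h2 (pow_nonneg hlr0 n)
    calc lr ^ n * (∑ l ∈ Finset.range j, (lr ^ T) ^ l) * d
        ≤ lr ^ n * (1 - lr ^ T)⁻¹ * d := h3
      _ = lr ^ n * (d * (1 - lr ^ T)⁻¹) := by ring
  have hlim : ∀ n, |f^[n] u - f^[n] z| ≤ lr ^ n * (d * (1 - lr ^ T)⁻¹) := by
    intro n
    have hcont : Filter.Tendsto (fun j => |f^[n] u - f^[n + T * j] u|) Filter.atTop
        (nhds (|f^[n] u - f^[n] z|)) := by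
      have := (hWn' n).const_sub (f^[n] u)
      exact this.abs
    apply le_of_tendsto hcont
    filter_upwards with j
    exact (hA n j).trans (hgeom n j)
  apply squeeze_zero (fun n => abs_nonneg _) hlim
  have := (tendsto_pow_atTop_nhds_zero_of_lt_one hlr0 hlr1).mul_const (d * (1 - lr ^ T)⁻¹)
  simpa using this

end Core

lemma iterate_per {f : ℝ → ℝ} {p : ℕ} {z : ℝ} (hz : f^[p] z = z) :
    ∀ q n, f^[n + p * q] z = f^[n] z := by
  intro q
  induction q with
  | zero => simp
  | succ q ih =>
      intro n
      have h1 : n + p * (q + 1) = (n + p * q) + p := by ring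
      rw [h1, Function.iterate_add_apply, hz, ih]

lemma iterate_mod {f : ℝ → ℝ} {p : ℕ} {z : ℝ} (hp : 1 ≤ p) (hz : f^[p] z = z) (n : ℕ) :
    f^[n] z = f^[n % p] z := by
  conv_lhs => rw [← Nat.mod_add_div n p]
  exact iterate_per hz (n / p) (n % p)

lemma cluster_shift (f : ℝ → ℝ) (x y : ℝ) (m : ℕ) :
    MapClusterPt y Filter.atTop (fun n => f^[n] x) ↔
    MapClusterPt y Filter.atTop (fun n => f^[n + m] x) := by
  unfold MapClusterPt
  have h1 : Filter.map (fun n => f^[n + m] x) Filter.atTop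
      = Filter.map (fun n => f^[n] x) Filter.atTop := by
    conv_rhs => rw [← Filter.map_add_atTop_eq_nat m, Filter.map_map]
    rfl
  rw [h1]

lemma omega_eq (f : ℝ → ℝ) (x z : ℝ) (m p : ℕ) (hp : 1 ≤ p) (hz : f^[p] z = z)
    (hconv : Filter.Tendsto (fun n => |f^[n + m] x - f^[n] z|) Filter.atTop (nhds 0)) :
    omegaLimitPt f x = Set.range (fun j : Fin p => f^[(j : ℕ)] z) := by
  haveI : NeZero p := ⟨by omega⟩
  ext y
  simp only [omegaLimitPt, Set.mem_setOf_eq, Set.mem_range]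
  rw [cluster_shift f x y m]
  constructor
  · intro hy
    by_contra hy'
    push_neg at hy'
    have hne : (Finset.univ : Finset (Fin p)).Nonempty := Finset.univ_nonempty
    set D : ℝ := Finset.inf' Finset.univ hne (fun j : Fin p => |y - f^[(j : ℕ)] z|) with hD
    have hD0 : 0 < D := by
      rw [hD, Finset.lt_inf'_iff]
      intro j _
      rw [abs_pos, sub_ne_zero]
      exact fun h => hy' j h.symm
    have hev : ∀ᶠ n in Filter.atTop, |f^[n + m] x - f^[n] z| < D / 2 :=
      hconv.eventually_lt_const (by linarith)
    have hfreq : ∃ᶠ n in Filter.atTop, f^[n + m] x ∈ Metric.ball y (D / 2) :=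
      (mapClusterPt_iff_frequently.1 hy) _ (Metric.ball_mem_nhds y (by linarith))
    obtain ⟨n, h1, h2⟩ := (hfreq.and_eventually hev).exists
    have h3 : |y - f^[n % p] z| < D := by
      rw [← iterate_mod hp hz n]
      have h4 : |f^[n + m] x - y| < D / 2 := by
        have := h1
        rwa [Metric.mem_ball, Real.dist_eq] at this
      calc |y - f^[n] z| ≤ |y - f^[n + m] x| + |f^[n + m] x - f^[n] z| := abs_sub_le _ _ _
        _ < D / 2 + D / 2 := by
            rw [abs_sub_comm] at h4
            exact add_lt_add h4 h2
        _ = D := by ring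
    have h5 : D ≤ |y - f^[n % p] z| := by
      have : (⟨n % p, Nat.mod_lt n (by omega)⟩ : Fin p) ∈ Finset.univ := Finset.mem_univ _
      exact Finset.inf'_le _ this
    linarith
  · rintro ⟨j, rfl⟩
    rw [mapClusterPt_iff_frequently]
    intro s hs
    obtain ⟨ε, hε, hball⟩ := Metric.mem_nhds_iff.1 hs
    rw [Filter.frequently_atTop]
    intro N
    obtain ⟨N', hN'⟩ := Filter.eventually_atTop.1 (hconv.eventually_lt_const hε)
    set n : ℕ := (j : ℕ) + p * (N + N') with hn
    refine ⟨n, ?_, ?_⟩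
    · have : p * (N + N') ≥ N + N' := Nat.le_mul_of_pos_left _ (by omega)
      omega
    · apply hball
      rw [Metric.mem_ball, Real.dist_eq]
      have h1 : f^[n] z = f^[(j : ℕ)] z := iterate_per hz (N + N') (j : ℕ)
      have h2 : |f^[n + m] x - f^[n] z| < ε := by
        apply hN'
        have : p * (N + N') ≥ N + N' := Nat.le_mul_of_pos_left _ (by omega)
        omega
      rwa [h1] at h2

theorem stmt10 {k : ℕ} (hk : 2 ≤ k) (φ : Fin k → ℝ → ℝ) (lam : ℝ≥0) (hlam : lam < 1)
    (hlip : ∀ i, LipschitzWith lam (φ i)) (hinj : ∀ i, Function.Injective (φ i))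
    (z : Fin k → ℝ) (hz : ∀ i, φ i (z i) = z i)
    (r : ℝ) (hr : r = ((1 + (lam : ℝ)) / (1 - (lam : ℝ))) * maxAbs hk z)
    (a : Fin (k-1) → ℝ) (ha : StrictMono a) (hns : ¬ hasSingConn φ a)
    (hQ : ((⋃ n : ℕ, (pc hk φ a)^[n] ⁻¹' Set.range a) ∩ Set.Icc (-(2*r)) (2*r)).Finite) :
    AsympPeriodic (pc hk φ a) := by
  set f := pc hk φ a with hfdef
  set lr : ℝ := (lam : ℝ) with hlrdef
  have hlr0 : 0 ≤ lr := lam.coe_nonneg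
  have hlr1 : lr < 1 := hlam
  set c : ℝ := maxAbs hk z with hcdef
  have hc0 : 0 ≤ c := by
    have h0 : (⟨0, by omega⟩ : Fin k) ∈ (Finset.univ : Finset (Fin k)) := Finset.mem_univ _
    have := Finset.le_sup' (fun i => |z i|) h0
    exact (abs_nonneg _).trans this
  have hr0 : 0 ≤ r := by
    rw [hr]
    exact mul_nonneg (div_nonneg (by linarith) (by linarith)) hc0
  have hrc : (1 + lr) * c = (1 - lr) * r := by
    have h1 : (1 : ℝ) - lr ≠ 0 := by linarith
    rw [hr]
    field_simp
  have pc_bound : ∀ t : ℝ, |f t| ≤ lr * |t| + (1 - lr) * r := by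
    intro t
    set i := pcIdx hk a t with hi
    have h1 : |φ i t - z i| = |φ i t - φ i (z i)| := by rw [hz i]
    have h2 : |φ i t - φ i (z i)| ≤ lr * |t - z i| := by
      have := (hlip i).dist_le_mul t (z i)
      simpa [Real.dist_eq] using this
    have h3 : |z i| ≤ c := Finset.le_sup' (fun i => |z i|) (Finset.mem_univ i)
    have h4 : |φ i t| ≤ |φ i t - z i| + |z i| := by
      have := abs_sub_abs_le_abs_sub (φ i t) (z i)
      have h5 := abs_add_le (φ i t - z i) (z i)
      calc |φ i t| = |(φ i t - z i) + z i| := by ring_nf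
        _ ≤ |φ i t - z i| + |z i| := abs_add_le _ _
    have h6 : |t - z i| ≤ |t| + |z i| := abs_sub _ _
    have h7 : |f t| = |φ i t| := rfl
    rw [h7]
    have h8 : lr * |t - z i| ≤ lr * (|t| + c) := by
      apply mul_le_mul_of_nonneg_left _ hlr0
      linarith
    calc |φ i t| ≤ |φ i t - z i| + |z i| := h4
      _ ≤ lr * (|t| + c) + c := by rw [h1]; linarith
      _ = lr * |t| + (1 + lr) * c := by ring
      _ = lr * |t| + (1 - lr) * r := by rw [hrc]
  have hfb : ∀ t : ℝ, |t| ≤ 2*r → |f t| ≤ 2*r := by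
    intro t ht
    have h1 := pc_bound t
    have h2 : lr * |t| ≤ lr * (2*r) := mul_le_mul_of_nonneg_left ht hlr0
    nlinarith
  have iter_bound : ∀ (n : ℕ) (t : ℝ), |f^[n] t| ≤ lr ^ n * |t| + r := by
    intro n t
    induction n with
    | zero => simp [hr0]
    | succ n ih =>
        rw [Function.iterate_succ_apply']
        have h1 := pc_bound (f^[n] t)
        have h2 : lr * |f^[n] t| ≤ lr * (lr ^ n * |t| + r) := mul_le_mul_of_nonneg_left ih hlr0
        have h3 : lr * (lr ^ n * |t| + r) = lr ^ (n+1) * |t| + lr * r := by ring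
        nlinarith
  set Qset : Set ℝ := (⋃ n : ℕ, f^[n] ⁻¹' Set.range a) ∩ Set.Icc (-(2*r)) (2*r) with hQdef
  have hGS : ∀ t : ℝ, t ∈ GS hk φ a (2*r) ↔ (t ∈ Set.Icc (-(2*r)) (2*r) ∧ t ∉ Qset) := by
    intro t
    constructor
    · rintro ⟨h1, h2⟩
      refine ⟨Set.mem_Icc.2 (abs_le.1 h1), ?_⟩
      rintro ⟨hU, _⟩
      obtain ⟨s, hs⟩ := Set.mem_iUnion.1 hU
      exact h2 s hs
    · rintro ⟨h1, h2⟩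
      refine ⟨abs_le.2 ⟨h1.1, h1.2⟩, fun n hn => ?_⟩
      exact h2 ⟨Set.mem_iUnion.2 ⟨n, hn⟩, h1⟩
  set patmap : ℝ → Finset ℝ := fun t => hQ.toFinset.filter (fun q => q < t) with hpatdef
  have pat_uIcc : ∀ x y : ℝ, x ∈ GS hk φ a (2*r) → y ∈ GS hk φ a (2*r) →
      patmap x = patmap y → Set.uIcc x y ⊆ GS hk φ a (2*r) := by
    intro x y hx hy hpat t ht
    have hxI := abs_le.1 hx.1
    have hyI := abs_le.1 hy.1
    have htI : t ∈ Set.Icc (-(2*r)) (2*r) := by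
      rcases Set.mem_uIcc.1 ht with ⟨h1, h2⟩ | ⟨h1, h2⟩ <;>
        exact ⟨by linarith [hxI.1, hyI.1], by linarith [hxI.2, hyI.2]⟩
    refine (hGS t).2 ⟨htI, ?_⟩
    intro htQ
    have htf : t ∈ hQ.toFinset := hQ.mem_toFinset.2 htQ
    have hxQ : x ∉ Qset := ((hGS x).1 hx).2
    have hyQ : y ∉ Qset := ((hGS y).1 hy).2
    have htx : t ≠ x := fun h => hxQ (h ▸ htQ)
    have hty : t ≠ y := fun h => hyQ (h ▸ htQ)
    rcases Set.mem_uIcc.1 ht with ⟨h1, h2⟩ | ⟨h1, h2⟩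
    · have h3 : t < y := lt_of_le_of_ne h2 hty
      have h4 : t ∈ patmap y := Finset.mem_filter.2 ⟨htf, h3⟩
      rw [← hpat] at h4
      have h5 : t < x := (Finset.mem_filter.1 h4).2
      exact absurd h1 (not_le.2 h5)
    · have h3 : t < x := lt_of_le_of_ne h2 htx
      have h4 : t ∈ patmap x := Finset.mem_filter.2 ⟨htf, h3⟩
      rw [hpat] at h4
      have h5 : t < y := (Finset.mem_filter.1 h4).2
      exact absurd h1 (not_le.2 h5)
  constructor
  · -- finiteness of periodic points
    set Pset : Set ℝ := {x : ℝ | ∃ p : ℕ, 1 ≤ p ∧ f^[p] x = x} with hPdef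
    have hPerK : ∀ x ∈ Pset, |x| ≤ 2*r := by
      rintro x ⟨p, hp, hpx⟩
      have hlrp : lr ^ p < 1 := pow_lt_one₀ hlr0 hlr1 (by omega)
      have hlrp0 : 0 ≤ lr ^ p := pow_nonneg hlr0 p
      have hb : ∀ j : ℕ, |x| ≤ (lr ^ p) ^ j * |x| + r := by
        intro j
        have h1 : f^[p * j] x = x := by
          have := iterate_per hpx j 0
          simpa using this
        have h2 := iter_bound (p * j) x
        rw [h1] at h2
        rwa [pow_mul] at h2
      have htend : Filter.Tendsto (fun j : ℕ => (lr ^ p) ^ j * |x| + r)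
          Filter.atTop (nhds r) := by
        have := (tendsto_pow_atTop_nhds_zero_of_lt_one hlrp0 hlrp).mul_const |x|
        have h2 := this.add_const r
        simpa using h2
      have := ge_of_tendsto htend (Filter.Eventually.of_forall hb)
      linarith
    have hsub : Pset ⊆ Qset ∪ {x ∈ Pset | x ∈ GS hk φ a (2*r)} := by
      intro x hx
      by_cases hq : x ∈ Qset
      · exact Or.inl hq
      · refine Or.inr ⟨hx, (hGS x).2 ⟨?_, hq⟩⟩
        have := hPerK x hx
        exact abs_le.1 this
    have hPG : {x ∈ Pset | x ∈ GS hk φ a (2*r)}.Finite := by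
      apply Set.Finite.of_finite_image (f := patmap)
      · apply Set.Finite.subset (Finset.finite_toSet hQ.toFinset.powerset)
        rintro s ⟨x, _, rfl⟩
        simp only [Finset.coe_powerset, Set.mem_preimage, Set.mem_powerset_iff]
        exact Finset.coe_subset.2 (Finset.filter_subset _ _)
      · rintro x ⟨⟨px, hpx1, hpx2⟩, hxG⟩ y ⟨⟨py, hpy1, hpy2⟩, hyG⟩ hpat
        have huv := pat_uIcc x y hxG hyG hpat
        have hb : ∀ j : ℕ, |x - y| ≤ lr ^ j * |x - y| := by
          intro j
          set n : ℕ := px * (py * j) with hn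
          have hx' : f^[n] x = x := by
            have := iterate_per hpx2 (py * j) 0
            simpa using this
          have hy' : f^[n] y = y := by
            have h1 : n = py * (px * j) := by rw [hn]; ring
            rw [h1]
            have := iterate_per hpy2 (px * j) 0
            simpa using this
          have h2 := GS_contract hk φ lam hlip a (2*r) hfb huv n
          rw [hx', hy'] at h2
          have h3 : j ≤ n := by
            rw [hn]
            calc j ≤ py * j := Nat.le_mul_of_pos_left _ (by omega)
              _ ≤ px * (py * j) := Nat.le_mul_of_pos_left _ (by omega)
          have h4 : lr ^ n ≤ lr ^ j := pow_le_pow_of_le_one hlr0 hlr1.le h3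
          calc |x - y| ≤ lr ^ n * |x - y| := h2
            _ ≤ lr ^ j * |x - y| := mul_le_mul_of_nonneg_right h4 (abs_nonneg _)
        have htend : Filter.Tendsto (fun j : ℕ => lr ^ j * |x - y|)
            Filter.atTop (nhds 0) := by
          have := (tendsto_pow_atTop_nhds_zero_of_lt_one hlr0 hlr1).mul_const |x - y|
          simpa using this
        have h5 := ge_of_tendsto htend (Filter.Eventually.of_forall hb)
        have h6 : |x - y| = 0 := le_antisymm h5 (abs_nonneg _)
        have := abs_eq_zero.1 h6
        linarith
    exact Set.Finite.subset (hQ.union hPG) hsub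
  · -- every omega limit set is a periodic orbit
    intro x
    by_cases hc : c = 0
    · -- degenerate case : r = 0
      have hz0 : ∀ i, z i = 0 := by
        intro i
        have h3 : |z i| ≤ c := Finset.le_sup' (fun i => |z i|) (Finset.mem_univ i)
        rw [hc] at h3
        have := abs_nonneg (z i)
        have : |z i| = 0 := le_antisymm h3 (abs_nonneg _)
        exact abs_eq_zero.1 this
      have hrz : r = 0 := by rw [hr, hc, mul_zero]
      have hf0 : ∀ n : ℕ, f^[n] (0:ℝ) = 0 := by
        intro n
        induction n with
        | zero => simp
        | succ n ih =>
            rw [Function.iterate_succ_apply', ih]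
            show pc hk φ a 0 = 0
            rw [pc]
            have h9 := hz (pcIdx hk a 0)
            rw [hz0 (pcIdx hk a 0)] at h9
            exact h9
      refine ⟨0, 1, le_refl 1, by simpa using hf0 1, ?_⟩
      apply omega_eq f x 0 0 1 le_rfl (by simpa using hf0 1)
      have hbd : ∀ n : ℕ, |f^[n + 0] x - f^[n] 0| ≤ lr ^ n * |x| := by
        intro n
        rw [hf0 n, Nat.add_zero, sub_zero]
        have := iter_bound n x
        rwa [hrz, add_zero] at this
      apply squeeze_zero (fun n => abs_nonneg _) hbd
      have := (tendsto_pow_atTop_nhds_zero_of_lt_one hlr0 hlr1).mul_const |x|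
      simpa using this
    · -- main case : r > 0
      have hrpos : 0 < r := by
        rcases hr0.lt_or_eq with h | h
        · exact h
        · exfalso
          rw [hr] at h
          have h1 : (0:ℝ) < (1 + lr) / (1 - lr) := div_pos (by linarith) (by linarith)
          rcases mul_eq_zero.1 h.symm with h2 | h2
          · linarith
          · exact hc h2
      -- the orbit eventually enters [-2r, 2r]
      have hentry : ∃ m0 : ℕ, ∀ n ≥ m0, |f^[n] x| ≤ 2*r := by
        have htend : Filter.Tendsto (fun n : ℕ => lr ^ n * |x|) Filter.atTop (nhds 0) := by
          have := (tendsto_pow_atTop_nhds_zero_of_lt_one hlr0 hlr1).mul_const |x|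
          simpa using this
        have hev : ∀ᶠ n in Filter.atTop, lr ^ n * |x| < r := htend.eventually_lt_const hrpos
        obtain ⟨m0, hm0⟩ := Filter.eventually_atTop.1 hev
        refine ⟨m0, fun n hn => ?_⟩
        have h1 := iter_bound n x
        have h2 := hm0 n hn
        linarith
      obtain ⟨m0, hm0⟩ := hentry
      by_cases hrep : ∃ n1 n2 : ℕ, n1 < n2 ∧ f^[n1] x = f^[n2] x
      · -- eventually periodic orbit
        obtain ⟨n1, n2, hlt, heq⟩ := hrep
        refine ⟨f^[n1] x, n2 - n1, by omega, ?_, ?_⟩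
        · rw [← Function.iterate_add_apply]
          have h1 : n2 - n1 + n1 = n2 := by omega
          rw [h1, ← heq]
        · have hzz : f^[n2 - n1] (f^[n1] x) = f^[n1] x := by
            rw [← Function.iterate_add_apply]
            have h1 : n2 - n1 + n1 = n2 := by omega
            rw [h1, ← heq]
          apply omega_eq f x (f^[n1] x) n1 (n2 - n1) (by omega) hzz
          have : ∀ n : ℕ, |f^[n + n1] x - f^[n] (f^[n1] x)| = 0 := by
            intro n
            rw [← Function.iterate_add_apply, sub_self, abs_zero]
          simp only [this]
          exact tendsto_const_nhds
      · -- injective orbit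
        push_neg at hrep
        have hinjor : Function.Injective (fun n : ℕ => f^[n] x) := by
          intro n1 n2 h
          by_contra hne
          rcases Nat.lt_or_ge n1 n2 with h1 | h1
          · exact hrep n1 n2 h1 h
          · have h2 : n2 < n1 := by omega
            exact hrep n2 n1 h2 h.symm
        have hS : {n : ℕ | f^[n] x ∈ Qset}.Finite := by
          have : {n : ℕ | f^[n] x ∈ Qset} = (fun n : ℕ => f^[n] x) ⁻¹' Qset := rfl
          rw [this]
          exact Set.Finite.preimage hinjor.injOn hQ
        obtain ⟨B, hB⟩ := hS.bddAbove
        set m1 : ℕ := max m0 (B + 1) with hm1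
        have hGmem : ∀ n ≥ m1, f^[n] x ∈ GS hk φ a (2*r) := by
          intro n hn
          refine (hGS _).2 ⟨abs_le.1 (hm0 n (le_trans (le_max_left _ _) hn)), ?_⟩
          intro hq
          have h1 : n ∈ {n : ℕ | f^[n] x ∈ Qset} := hq
          have h2 := hB h1
          have h3 : B + 1 ≤ n := le_trans (le_max_right m0 (B+1)) hn
          omega
        -- pigeonhole on the patterns
        have hmt : Set.MapsTo (fun n : ℕ => patmap (f^[m1 + n] x)) Set.univ
            ↑hQ.toFinset.powerset := by
          intro n _
          simp only [Finset.coe_powerset, Set.mem_preimage, Set.mem_powerset_iff]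
          exact Finset.coe_subset.2 (Finset.filter_subset _ _)
        obtain ⟨n1, -, n2, -, hne, heq⟩ :=
          Set.infinite_univ.exists_ne_map_eq_of_mapsTo hmt
            (Finset.finite_toSet hQ.toFinset.powerset)
        have main : ∀ n1 n2 : ℕ, n1 < n2 →
            patmap (f^[m1 + n1] x) = patmap (f^[m1 + n2] x) →
            ∃ zz : ℝ, ∃ p : ℕ, 1 ≤ p ∧ f^[p] zz = zz ∧
              omegaLimitPt f x = Set.range fun j : Fin p => f^[(j:ℕ)] zz := by
          clear hne heq n1 n2
          intro n1 n2 hlt hpat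
          set u : ℝ := f^[m1 + n1] x with hu
          set T : ℕ := n2 - n1 with hT
          have hfT : f^[T] u = f^[m1 + n2] x := by
            rw [hu, ← Function.iterate_add_apply]
            congr 1
            omega
          have huv : Set.uIcc u (f^[T] u) ⊆ GS hk φ a (2*r) := by
            apply pat_uIcc u (f^[T] u) (hGmem (m1 + n1) (by omega))
            · rw [hfT]; exact hGmem (m1 + n2) (by omega)
            · rw [hfT]; exact hpat
          obtain ⟨zz, hzT, htend⟩ :=
            key hk φ lam hlip a (2*r) hfb hlam hns u T (by omega) huv
          refine ⟨zz, T, by omega, hzT, ?_⟩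
          apply omega_eq f x zz (m1 + n1) T (by omega) hzT
          have hre : ∀ n : ℕ, f^[n + (m1 + n1)] x = f^[n] u := by
            intro n
            rw [hu, ← Function.iterate_add_apply]
          refine htend.congr fun n => ?_
          rw [hre n]
        rcases hne.lt_or_gt with h | h
        · exact main n1 n2 h heq
        · exact main n2 n1 h heq.symm
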